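/- Let m ≥ 1 and n ≥ 1 be integers. The optimal value of the OPA linear program is exactly Z* = 1 / (n · Σ_{k=1}^{m} 1/k), and this value is attained by the feasible point w_{k,r} = (Z*/k) · Σ_{h=r}^{n} (1/h). -/

import Mathlib

/-- Feasibility predicate for the OPA linear program with `m` experts and `n` criteria:
`w k r` is the weight expert `k` assigns to the criterion ranked in position `r`. -/
def OPAFeasible (m n : ℕ) (Z : ℝ) (w : ℕ → ℕ → ℝ) : Prop :=
  (∀ k ∈ Finset.Icc 1 m, ∀ r ∈ Finset.Icc 1 n, 0 ≤ w k r) ∧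
  (∀ k ∈ Finset.Icc 1 m, ∀ r ∈ Finset.Icc 1 (n - 1),
      (k : ℝ) * r * (w k r - w k (r + 1)) ≥ Z) ∧
  (∀ k ∈ Finset.Icc 1 m, (k : ℝ) * n * w k n ≥ Z) ∧
  (∑ k ∈ Finset.Icc 1 m, ∑ r ∈ Finset.Icc 1 n, w k r = 1)

/-- The optimal value `Z*` of the OPA linear program: the supremum of `Z` over feasible points. -/
noncomputable def OPAOptimal (m n : ℕ) : ℝ :=
  sSup {Z : ℝ | ∃ w : ℕ → ℕ → ℝ, OPAFeasible m n Z w}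

/-- The optimal value of the OPA linear program is exactly
`Z* = 1/(n * Σ_{k=1}^m 1/k)`, attained at `w k r = (Z*/k) * Σ_{h=r}^n 1/h`. -/

lemma icc_insert (r n : ℕ) (h : r ≤ n) :
    Finset.Icc r n = insert r (Finset.Icc (r+1) n) := by
  ext x; simp [Finset.mem_Icc]; omega

lemma sum_icc_split (r n : ℕ) (h : r ≤ n) (f : ℕ → ℝ) :
    ∑ h ∈ Finset.Icc r n, f h = f r + ∑ h ∈ Finset.Icc (r+1) n, f h := by
  rw [icc_insert r n h, Finset.sum_insert (by simp)]

lemma double_sum (n : ℕ) :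
    ∑ r ∈ Finset.Icc 1 n, ∑ h ∈ Finset.Icc r n, (1:ℝ)/h = n := by
  induction n with
  | zero => simp
  | succ n ih =>
    rw [Finset.sum_Icc_succ_top (by omega)]
    have h1 : ∀ r ∈ Finset.Icc 1 n,
        (∑ h ∈ Finset.Icc r (n+1), (1:ℝ)/h)
          = (∑ h ∈ Finset.Icc r n, (1:ℝ)/h) + 1/(n+1) := by
      intro r hr
      have hr1 : r ≤ n + 1 := le_trans (Finset.mem_Icc.mp hr).2 (Nat.le_succ n)
      rw [Finset.sum_Icc_succ_top hr1]
      push_cast; ring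
    rw [Finset.sum_congr rfl h1, Finset.sum_add_distrib, ih, Finset.sum_const,
      Nat.card_Icc]
    simp only [Finset.Icc_self, Finset.sum_singleton]
    have hn1 : ((n:ℝ)+1) ≠ 0 := by positivity
    push_cast
    simp only [nsmul_eq_mul]
    field_simp
    ring

lemma expert_lb (n k : ℕ) (Z : ℝ) (w : ℕ → ℕ → ℝ) (hk : 1 ≤ k)
    (h2 : ∀ r ∈ Finset.Icc 1 (n-1), (k:ℝ)*r*(w k r - w k (r+1)) ≥ Z)
    (h3 : (k:ℝ)*n*(w k n) ≥ Z) :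
    ∀ d r, 1 ≤ r → r + d = n → Z/k * ∑ h ∈ Finset.Icc r n, (1:ℝ)/h ≤ w k r := by
  have hk0 : (0:ℝ) < k := by exact_mod_cast hk
  intro d
  induction d with
  | zero =>
    intro r hr1 hrn
    simp only [Nat.add_zero] at hrn
    subst hrn
    have hr0 : (0:ℝ) < r := by exact_mod_cast hr1
    rw [Finset.Icc_self, Finset.sum_singleton]
    rw [div_mul_div_comm, div_le_iff₀ (by positivity), mul_one]
    calc Z ≤ (k:ℝ)*r*(w k r) := h3
    _ = w k r * ((k:ℝ)*r) := by ring
  | succ d ih =>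
    intro r hr1 hrn
    have hr0 : (0:ℝ) < r := by exact_mod_cast hr1
    have hrle : r ≤ n - 1 := by omega
    have key := h2 r (Finset.mem_Icc.mpr ⟨hr1, hrle⟩)
    have hstep : Z/((k:ℝ)*r) ≤ w k r - w k (r+1) := by
      rw [div_le_iff₀ (by positivity)]
      calc Z ≤ (k:ℝ)*r*(w k r - w k (r+1)) := key
      _ = (w k r - w k (r+1)) * ((k:ℝ)*r) := by ring
    have ihr := ih (r+1) (by omega) (by omega)
    rw [sum_icc_split r n (by omega)]
    have expand : Z/(k:ℝ) * ((1:ℝ)/r + ∑ h ∈ Finset.Icc (r+1) n, (1:ℝ)/h)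
        = Z/((k:ℝ)*r) + Z/(k:ℝ) * ∑ h ∈ Finset.Icc (r+1) n, (1:ℝ)/h := by
      field_simp
    rw [expand]
    linarith

theorem opa_optimal_value (m n : ℕ) (hm : 1 ≤ m) (hn : 1 ≤ n) :
    OPAOptimal m n = 1 / ((n : ℝ) * ∑ k ∈ Finset.Icc 1 m, (1 : ℝ) / k) ∧
    IsGreatest {Z : ℝ | ∃ w : ℕ → ℕ → ℝ, OPAFeasible m n Z w}
      (1 / ((n : ℝ) * ∑ k ∈ Finset.Icc 1 m, (1 : ℝ) / k)) ∧
    OPAFeasible m n (1 / ((n : ℝ) * ∑ k ∈ Finset.Icc 1 m, (1 : ℝ) / k))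
      (fun k r => (1 / ((n : ℝ) * ∑ j ∈ Finset.Icc 1 m, (1 : ℝ) / j)) / (k : ℝ) *
        ∑ h ∈ Finset.Icc r n, (1 : ℝ) / h) := by
  have hn0 : (0:ℝ) < n := by exact_mod_cast hn
  set S := ∑ k ∈ Finset.Icc 1 m, (1:ℝ)/k with hSdef
  have hS : (0:ℝ) < S := by
    apply Finset.sum_pos
    · intro k hk
      have hk1 : 1 ≤ k := (Finset.mem_Icc.mp hk).1
      have : (0:ℝ) < k := by exact_mod_cast hk1
      positivity
    · exact ⟨1, Finset.mem_Icc.mpr ⟨le_refl 1, hm⟩⟩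
  set Zs := 1 / ((n:ℝ) * S) with hZdef
  have hZpos : 0 < Zs := by rw [hZdef]; positivity
  have hfeas : OPAFeasible m n Zs
      (fun k r => Zs / (k:ℝ) * ∑ h ∈ Finset.Icc r n, (1:ℝ)/h) := by
    refine ⟨?_, ?_, ?_, ?_⟩
    · intro k hk r hr
      have hk1 : 1 ≤ k := (Finset.mem_Icc.mp hk).1
      have hk0 : (0:ℝ) < k := by exact_mod_cast hk1
      simp only
      apply mul_nonneg (by positivity)
      apply Finset.sum_nonneg
      intro h _
      positivity
    · intro k hk r hr
      have hk1 : 1 ≤ k := (Finset.mem_Icc.mp hk).1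
      obtain ⟨hr1, hr2⟩ := Finset.mem_Icc.mp hr
      have hk0 : (0:ℝ) < k := by exact_mod_cast hk1
      have hr0 : (0:ℝ) < r := by exact_mod_cast hr1
      simp only
      have hAB : ∑ h ∈ Finset.Icc r n, (1:ℝ)/h
          = 1/(r:ℝ) + ∑ h ∈ Finset.Icc (r+1) n, (1:ℝ)/h :=
        sum_icc_split r n (by omega) _
      have heq : (k:ℝ) * r * (Zs/(k:ℝ) * ∑ h ∈ Finset.Icc r n, (1:ℝ)/h
          - Zs/(k:ℝ) * ∑ h ∈ Finset.Icc (r+1) n, (1:ℝ)/h) = Zs := by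
        rw [hAB]
        field_simp
        ring
      exact ge_of_eq heq
    · intro k hk
      have hk1 : 1 ≤ k := (Finset.mem_Icc.mp hk).1
      have hk0 : (0:ℝ) < k := by exact_mod_cast hk1
      simp only
      have heq : (k:ℝ) * n * (Zs/(k:ℝ) * ∑ h ∈ Finset.Icc n n, (1:ℝ)/h) = Zs := by
        rw [Finset.Icc_self, Finset.sum_singleton]
        field_simp
      exact ge_of_eq heq
    · simp only
      have inner : ∀ k ∈ Finset.Icc 1 m,
          (∑ r ∈ Finset.Icc 1 n, Zs/(k:ℝ) * ∑ h ∈ Finset.Icc r n, (1:ℝ)/h)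
            = Zs/(k:ℝ) * n := by
        intro k _
        rw [← Finset.mul_sum, double_sum]
      rw [Finset.sum_congr rfl inner]
      have : ∑ k ∈ Finset.Icc 1 m, Zs/(k:ℝ) * n = Zs * ((n:ℝ) * S) := by
        rw [hSdef, Finset.mul_sum, Finset.mul_sum]
        exact Finset.sum_congr rfl (fun k _ => by ring)
      rw [this, hZdef]
      field_simp
  have hub : ∀ Z ∈ {Z : ℝ | ∃ w : ℕ → ℕ → ℝ, OPAFeasible m n Z w}, Z ≤ Zs := by
    rintro Z ⟨w, h1, h2, h3, h4⟩
    have key : ∀ k ∈ Finset.Icc 1 m, Z/(k:ℝ) * n ≤ ∑ r ∈ Finset.Icc 1 n, w k r := by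
      intro k hk
      have hk1 : 1 ≤ k := (Finset.mem_Icc.mp hk).1
      have each : ∀ r ∈ Finset.Icc 1 n,
          Z/(k:ℝ) * ∑ h ∈ Finset.Icc r n, (1:ℝ)/h ≤ w k r := by
        intro r hr
        obtain ⟨hr1, hr2⟩ := Finset.mem_Icc.mp hr
        exact expert_lb n k Z w hk1 (h2 k hk) (h3 k hk) (n - r) r hr1 (by omega)
      calc Z/(k:ℝ) * n
          = ∑ r ∈ Finset.Icc 1 n, Z/(k:ℝ) * ∑ h ∈ Finset.Icc r n, (1:ℝ)/h := by
            rw [← Finset.mul_sum, double_sum]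
        _ ≤ ∑ r ∈ Finset.Icc 1 n, w k r := Finset.sum_le_sum each
    have hsum : ∑ k ∈ Finset.Icc 1 m, Z/(k:ℝ) * n ≤ 1 := by
      rw [← h4]
      exact Finset.sum_le_sum key
    have hZnS : Z * ((n:ℝ) * S) ≤ 1 := by
      have heq : Z * ((n:ℝ) * S) = ∑ k ∈ Finset.Icc 1 m, Z/(k:ℝ) * n := by
        rw [hSdef, Finset.mul_sum, Finset.mul_sum]
        exact Finset.sum_congr rfl (fun k _ => by ring)
      linarith [heq ▸ hsum]
    rw [hZdef]
    exact (le_div_iff₀ (by positivity)).mpr hZnS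
  have hgt : IsGreatest {Z : ℝ | ∃ w : ℕ → ℕ → ℝ, OPAFeasible m n Z w} Zs :=
    ⟨⟨_, hfeas⟩, hub⟩
  exact ⟨hgt.csSup_eq, hgt, hfeas⟩
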